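/- arXiv:2602.16495 — 3 statements merged into one kernel-verified Lean document; each statement's English description precedes it below -/
import Mathlib

section
/- Let σ > 0, R > 0 and v_s ∈ ℝ. Define the Alcubierre shift field on ℝ³ \ {0} by V_i(x) = v_s · f_{σ,R}(|x|) · δ_{i1}. If the coordinate vorticity Ω_{ij} = (∂_j V_i − ∂_i V_j)/2 vanishes at every point of ℝ³ \ {0}, then v_s = 0; consequently V ≡ 0 and the extrinsic curvature K_{ij} = −(∂_i V_j + ∂_j V_i)/2 vanishes identically (the coordinate-vorticity-free Alcubierre warp drive is Minkowski). -/
open scoped BigOperators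

/-- Partial derivative `∂ᵢ f` on `ℝ³ = Fin 3 → ℝ`. -/
noncomputable def pd (i : Fin 3) (f : (Fin 3 → ℝ) → ℝ) (x : Fin 3 → ℝ) : ℝ :=
  fderiv ℝ f x (Pi.single i 1)

/-- Euclidean norm on `ℝ³`. -/
noncomputable def enorm3 (x : Fin 3 → ℝ) : ℝ := Real.sqrt (∑ i, x i ^ 2)

/-- The Alcubierre form function `f_{σ,R}`. -/
noncomputable def alcForm (σ R r : ℝ) : ℝ :=
  (Real.tanh (σ * (r + R)) - Real.tanh (σ * (r - R))) / (2 * Real.tanh (σ * R))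

lemma my_hasDerivAt_tanh (x : ℝ) :
    HasDerivAt Real.tanh (1 - Real.tanh x ^ 2) x := by
  have hc : Real.cosh x ≠ 0 := (Real.cosh_pos x).ne'
  have h := (Real.hasDerivAt_sinh x).div (Real.hasDerivAt_cosh x) hc
  have hfun : (Real.sinh / Real.cosh) = Real.tanh :=
    funext fun y => (Real.tanh_eq_sinh_div_cosh y).symm
  rw [hfun] at h
  refine h.congr_deriv ?_
  rw [Real.tanh_eq_sinh_div_cosh]
  field_simp

lemma my_tanh_pos {x : ℝ} (hx : 0 < x) : 0 < Real.tanh x := by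
  rw [Real.tanh_eq_sinh_div_cosh]
  exact div_pos (by rwa [Real.sinh_pos_iff]) (Real.cosh_pos x)

lemma alcForm_hasDerivAt (σ R r : ℝ) :
    HasDerivAt (fun r => alcForm σ R r)
      (((1 - Real.tanh (σ * (r + R)) ^ 2) * σ -
        (1 - Real.tanh (σ * (r - R)) ^ 2) * σ) / (2 * Real.tanh (σ * R))) r := by
  have h1 : HasDerivAt (fun r : ℝ => σ * (r + R)) σ r := by
    simpa using ((hasDerivAt_id r).add_const R).const_mul σ
  have h2 : HasDerivAt (fun r : ℝ => σ * (r - R)) σ r := by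
    simpa using ((hasDerivAt_id r).sub_const R).const_mul σ
  have hp := (my_hasDerivAt_tanh (σ * (r + R))).comp r h1
  have hm := (my_hasDerivAt_tanh (σ * (r - R))).comp r h2
  simpa [alcForm, Function.comp] using (hp.sub hm).div_const (2 * Real.tanh (σ * R))

/-- If the coordinate vorticity of the Alcubierre shift field vanishes on `ℝ³ \ {0}`,
then `v_s = 0`, the shift vanishes identically, and the extrinsic curvature vanishes
identically: the coordinate-vorticity-free Alcubierre warp drive is Minkowski. -/
theorem vorticity_free_alcubierre_is_minkowski
    (σ R vs : ℝ) (hσ : 0 < σ) (hR : 0 < R)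
    (V : Fin 3 → (Fin 3 → ℝ) → ℝ)
    (hV : ∀ (i : Fin 3) (x : Fin 3 → ℝ),
      V i x = vs * alcForm σ R (enorm3 x) * (if i = 0 then 1 else 0))
    (hΩ : ∀ x : Fin 3 → ℝ, x ≠ 0 →
      ∀ i j : Fin 3, (pd j (V i) x - pd i (V j) x) / 2 = 0) :
    vs = 0 ∧ (∀ (i : Fin 3) (x : Fin 3 → ℝ), V i x = 0) ∧
      (∀ (x : Fin 3 → ℝ) (i j : Fin 3),
        -(pd i (V j) x + pd j (V i) x) / 2 = 0) := by
  -- the point x₀ = (0, R, 0)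
  set x₀ : Fin 3 → ℝ := Pi.single (1 : Fin 3) R with hx₀def
  have hx₀1 : x₀ 1 = R := by simp [hx₀def]
  have hx₀ne : x₀ ≠ 0 := by
    intro h
    have := congrFun h 1
    simp [hx₀1] at this
    exact hR.ne' this
  -- V 1 is the zero function
  have hV1 : V 1 = fun _ => 0 := funext fun x => by simp [hV]
  -- V 0 explicitly
  have hV0 : V 0 = fun x => vs * alcForm σ R (Real.sqrt (∑ i, x i ^ 2)) :=
    funext fun x => by simp [hV, enorm3]
  -- sum of squares at x₀
  have hsumval : (∑ i, x₀ i ^ 2) = R ^ 2 := by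
    simp [hx₀def, Fin.sum_univ_three, Pi.single_apply]
  have hR2ne : R ^ 2 ≠ 0 := pow_ne_zero 2 hR.ne'
  have hsqrtR2 : Real.sqrt (R ^ 2) = R := Real.sqrt_sq hR.le
  -- derivative of the sum of squares
  let P : Fin 3 → ((Fin 3 → ℝ) →L[ℝ] ℝ) := fun i => ContinuousLinearMap.proj i
  have hi : ∀ i : Fin 3, HasFDerivAt (fun x : Fin 3 → ℝ => x i ^ 2)
      (x₀ i • P i + x₀ i • P i) x₀ := by
    intro i
    have h : HasFDerivAt (fun x : Fin 3 → ℝ => x i) (P i) x₀ :=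
      hasFDerivAt_apply (𝕜 := ℝ) i x₀
    simpa [pow_two] using h.fun_mul h
  have hsum : HasFDerivAt (fun x : Fin 3 → ℝ => ∑ i, x i ^ 2)
      (∑ i, (x₀ i • P i + x₀ i • P i)) x₀ :=
    HasFDerivAt.fun_sum fun i _ => hi i
  -- compose with sqrt
  have hsqrt : HasDerivAt Real.sqrt (1 / (2 * R)) (R ^ 2) := by
    have := Real.hasDerivAt_sqrt hR2ne
    rwa [hsqrtR2] at this
  have hcomp1 : HasFDerivAt (fun x : Fin 3 → ℝ => Real.sqrt (∑ i, x i ^ 2))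
      ((1 / (2 * R)) •
        (∑ i, (x₀ i • P i + x₀ i • P i))) x₀ :=
    hsqrt.comp_hasFDerivAt_of_eq x₀ hsum hsumval.symm
  -- compose with alcForm
  set d : ℝ := ((1 - Real.tanh (σ * (R + R)) ^ 2) * σ -
      (1 - Real.tanh (σ * (R - R)) ^ 2) * σ) / (2 * Real.tanh (σ * R)) with hd
  have hval : Real.sqrt (∑ i, x₀ i ^ 2) = R := by rw [hsumval, hsqrtR2]
  have hcomp2 : HasFDerivAt (fun x : Fin 3 → ℝ => alcForm σ R (Real.sqrt (∑ i, x i ^ 2)))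
      (d • ((1 / (2 * R)) •
        (∑ i, (x₀ i • P i + x₀ i • P i)))) x₀ :=
    (alcForm_hasDerivAt σ R R).comp_hasFDerivAt_of_eq x₀ hcomp1 hval.symm
  have hF : HasFDerivAt (V 0)
      (vs • (d • ((1 / (2 * R)) •
        (∑ i, (x₀ i • P i + x₀ i • P i))))) x₀ := by
    rw [hV0]; exact hcomp2.const_mul vs
  -- the vorticity condition at x₀
  have hΩ01 := hΩ x₀ hx₀ne 0 1
  have hpdV1 : pd 0 (V 1) x₀ = 0 := by
    simp [pd, hV1, fderiv_const]
  have hpdV0 : pd 1 (V 0) x₀ = 0 := by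
    have := hΩ01
    rw [hpdV1] at this
    have h2 : pd 1 (V 0) x₀ - 0 = 0 := by linarith [this]
    linarith [h2]
  -- compute pd 1 (V 0) x₀ = vs * d
  have heval : pd 1 (V 0) x₀ = vs * d := by
    rw [pd, hF.fderiv]
    have h1 : (∑ i, (x₀ i • P i + x₀ i • P i)) (Pi.single (1 : Fin 3) 1) = 2 * R := by
      simp only [ContinuousLinearMap.sum_apply, ContinuousLinearMap.add_apply,
        ContinuousLinearMap.smul_apply, P, ContinuousLinearMap.proj_apply,
        Fin.sum_univ_three, hx₀def, smul_eq_mul]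
      simp [Pi.single_apply]
      ring
    simp only [ContinuousLinearMap.smul_apply, h1, smul_eq_mul]
    have h2R : (2 * R) ≠ 0 := by positivity
    field_simp
  -- d ≠ 0
  have hdne : d ≠ 0 := by
    have h0 : Real.tanh (σ * (R - R)) = 0 := by simp [Real.tanh_zero]
    have ht1 : 0 < Real.tanh (σ * (R + R)) := my_tanh_pos (by positivity)
    have ht2 : 0 < Real.tanh (σ * R) := my_tanh_pos (by positivity)
    rw [hd, h0]
    have hnum : (1 - Real.tanh (σ * (R + R)) ^ 2) * σ - (1 - (0:ℝ) ^ 2) * σ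
        = -(Real.tanh (σ * (R + R)) ^ 2 * σ) := by ring
    rw [hnum]
    apply div_ne_zero
    · have : 0 < Real.tanh (σ * (R + R)) ^ 2 * σ := by positivity
      linarith
    · positivity
  have hvs : vs = 0 := by
    have : vs * d = 0 := by rw [← heval]; exact hpdV0
    exact (mul_eq_zero.mp this).resolve_right hdne
  refine ⟨hvs, ?_, ?_⟩
  · intro i x; rw [hV, hvs]; ring
  · intro x i j
    have hVz : ∀ k : Fin 3, V k = fun _ => 0 :=
      fun k => funext fun y => by rw [hV, hvs]; ring
    simp [pd, hVz, fderiv_const]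
end

section
/- Let V = (V₁, V₂, V₃) be a C² vector field on ℝ³ with compact support. Then ∫_{ℝ³} [ (∑_i ∂_i V_i)² − ∑_{i,j} ∂_i V_j · (∂_i V_j + ∂_j V_i)/2 ] dx = − ∫_{ℝ³} ∑_{i,j} Ω_{ij} Ω_{ij} dx ≤ 0, where Ω_{ij} = (∂_j V_i − ∂_i V_j)/2; the integral is zero if and only if Ω ≡ 0. Consequently, the total Eulerian energy E_tot = (1/16πG) ∫ [ (div V)² − ∑_{i,j} ∂_i V_j ∂_{(i} V_{j)} ] dx of an R-Warp model with compactly supported shift is nonpositive, and vanishes exactly when the coordinate vorticity vanishes identically. -/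
open scoped BigOperators
open MeasureTheory

section Aux

lemma pd_contDiff {f : (Fin 3 → ℝ) → ℝ} (hf : ContDiff ℝ 2 f) (i : Fin 3) :
    ContDiff ℝ 1 (pd i f) :=
  (hf.fderiv_right (by norm_num)).clm_apply contDiff_const

lemma pd_hcs {f : (Fin 3 → ℝ) → ℝ} (hs : HasCompactSupport f) (i : Fin 3) :
    HasCompactSupport (pd i f) :=
  hs.fderiv_apply ℝ (Pi.single i 1)

/-- Integration by parts on `ℝ³`. -/
lemma pd_ibp {f g : (Fin 3 → ℝ) → ℝ} (hf : ContDiff ℝ 1 f) (hg : ContDiff ℝ 1 g)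
    (hfs : HasCompactSupport f) (hgs : HasCompactSupport g) (i : Fin 3) :
    ∫ x, pd i f x * g x = - ∫ x, f x * pd i g x := by
  obtain ⟨C, hC⟩ := ContDiff.lipschitzWith_of_hasCompactSupport hfs hf one_ne_zero
  obtain ⟨D, hD⟩ := ContDiff.lipschitzWith_of_hasCompactSupport hgs hg one_ne_zero
  have h := LipschitzWith.integral_lineDeriv_mul_eq (μ := volume) hC hD hgs (Pi.single i 1)
  have e1 : ∀ x, lineDeriv ℝ f x (Pi.single i 1) = pd i f x := fun x =>
    ((hf.differentiable one_ne_zero) x).lineDeriv_eq_fderiv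
  have e2 : ∀ x, lineDeriv ℝ g x (-(Pi.single i 1)) = - pd i g x := fun x => by
    rw [((hg.differentiable one_ne_zero) x).lineDeriv_eq_fderiv, map_neg]; rfl
  calc ∫ x, pd i f x * g x
      = ∫ x, lineDeriv ℝ f x (Pi.single i 1) * g x := by simp_rw [e1]
    _ = ∫ x, lineDeriv ℝ g x (-(Pi.single i 1)) * f x := h
    _ = ∫ x, -(f x * pd i g x) := by
        congr 1; funext x; rw [e2 x]; ring
    _ = - ∫ x, f x * pd i g x := integral_neg _

/-- Clairaut / symmetry of second derivatives. -/
lemma pd_comm {f : (Fin 3 → ℝ) → ℝ} (hf : ContDiff ℝ 2 f) (i j : Fin 3) (x : Fin 3 → ℝ) :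
    pd i (pd j f) x = pd j (pd i f) x := by
  have hsymm := (hf.contDiffAt (x := x)).isSymmSndFDerivAt (by simp)
  have hc : DifferentiableAt ℝ (fderiv ℝ f) x :=
    ((hf.fderiv_right (m := 1) (by norm_num)).differentiable one_ne_zero) x
  have key : ∀ v w : Fin 3 → ℝ,
      fderiv ℝ (fun y => fderiv ℝ f y w) x v = fderiv ℝ (fderiv ℝ f) x v w := by
    intro v w
    rw [fderiv_clm_apply hc (differentiableAt_const w)]
    simp
  show fderiv ℝ (fun y => fderiv ℝ f y (Pi.single j 1)) x (Pi.single i 1)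
      = fderiv ℝ (fun y => fderiv ℝ f y (Pi.single i 1)) x (Pi.single j 1)
  rw [key, key, hsymm]

end Aux

/-- For a C² compactly supported vector field `V` on `ℝ³`,
`∫ [(div V)² - ∑ ∂ᵢVⱼ ∂₍ᵢVⱼ₎] = -∫ ∑ Ω_{ij}Ω_{ij} ≤ 0`, with equality iff the
coordinate vorticity `Ω` vanishes identically; consequently the total Eulerian
energy `E_tot = (1/16πG) ∫ [(div V)² - ∑ ∂ᵢVⱼ ∂₍ᵢVⱼ₎]` of an R-Warp model with
compactly supported shift is nonpositive, and vanishes exactly when `Ω ≡ 0`. -/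
theorem total_eulerian_energy_nonpositive
    (G : ℝ) (hG : 0 < G)
    (V : Fin 3 → (Fin 3 → ℝ) → ℝ)
    (hV : ∀ i, ContDiff ℝ 2 (V i)) (hsupp : ∀ i, HasCompactSupport (V i)) :
    ((∫ x : Fin 3 → ℝ, ((∑ i, pd i (V i) x) ^ 2
        - ∑ i, ∑ j, pd i (V j) x * ((pd i (V j) x + pd j (V i) x) / 2)))
      = - ∫ x : Fin 3 → ℝ, ∑ i, ∑ j, ((pd j (V i) x - pd i (V j) x) / 2) ^ 2)
    ∧ ((∫ x : Fin 3 → ℝ, ((∑ i, pd i (V i) x) ^ 2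
        - ∑ i, ∑ j, pd i (V j) x * ((pd i (V j) x + pd j (V i) x) / 2))) ≤ 0)
    ∧ ((∫ x : Fin 3 → ℝ, ((∑ i, pd i (V i) x) ^ 2
        - ∑ i, ∑ j, pd i (V j) x * ((pd i (V j) x + pd j (V i) x) / 2)) = 0)
        ↔ ∀ (x : Fin 3 → ℝ) (i j : Fin 3), (pd j (V i) x - pd i (V j) x) / 2 = 0)
    ∧ ((1 / (16 * Real.pi * G)) * (∫ x : Fin 3 → ℝ, ((∑ i, pd i (V i) x) ^ 2
        - ∑ i, ∑ j, pd i (V j) x * ((pd i (V j) x + pd j (V i) x) / 2))) ≤ 0)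
    ∧ (((1 / (16 * Real.pi * G)) * (∫ x : Fin 3 → ℝ, ((∑ i, pd i (V i) x) ^ 2
        - ∑ i, ∑ j, pd i (V j) x * ((pd i (V j) x + pd j (V i) x) / 2))) = 0)
        ↔ ∀ (x : Fin 3 → ℝ) (i j : Fin 3), (pd j (V i) x - pd i (V j) x) / 2 = 0) := by
  have hcont : ∀ i j, Continuous (pd i (V j)) := fun i j => (pd_contDiff (hV j) i).continuous
  have hcs : ∀ i j, HasCompactSupport (pd i (V j)) := fun i j => pd_hcs (hsupp j) i
  have hint : ∀ (i j : Fin 3) (h : (Fin 3 → ℝ) → ℝ), Continuous h →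
      Integrable (fun x => pd i (V j) x * h x) := fun i j h hh =>
    ((hcont i j).mul hh).integrable_of_hasCompactSupport ((hcs i j).mul_right)
  -- integration by parts twice + Clairaut
  have hibp : ∀ i j : Fin 3,
      ∫ x, pd i (V i) x * pd j (V j) x = ∫ x, pd i (V j) x * pd j (V i) x := by
    intro i j
    have h1 : ∫ x, pd i (V i) x * pd j (V j) x = - ∫ x, V i x * pd i (pd j (V j)) x :=
      pd_ibp ((hV i).of_le one_le_two) (pd_contDiff (hV j) j) (hsupp i) (hcs j j) i
    have h2 : ∫ x, pd j (V i) x * pd i (V j) x = - ∫ x, V i x * pd j (pd i (V j)) x :=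
      pd_ibp ((hV i).of_le one_le_two) (pd_contDiff (hV j) i) (hsupp i) (hcs i j) j
    have h3 : ∀ x, pd i (pd j (V j)) x = pd j (pd i (V j)) x := pd_comm (hV j) i j
    have h4 : (fun x => pd j (V i) x * pd i (V j) x)
        = fun x => pd i (V j) x * pd j (V i) x := funext fun x => mul_comm _ _
    rw [h1]
    simp_rw [h3]
    rw [← h2, h4]
  -- pointwise algebraic identity
  have hpt : ∀ x, ∑ i, ∑ j, pd i (V j) x * ((pd i (V j) x + pd j (V i) x) / 2)
      = (∑ i, ∑ j, ((pd j (V i) x - pd i (V j) x) / 2) ^ 2)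
        + ∑ i, ∑ j, pd i (V j) x * pd j (V i) x := by
    intro x
    have hsw : ∑ i, ∑ j, (pd i (V j) x) ^ 2 / 4 = ∑ i, ∑ j, (pd j (V i) x) ^ 2 / 4 :=
      Finset.sum_comm
    have expand : ∀ i j : Fin 3,
        pd i (V j) x * ((pd i (V j) x + pd j (V i) x) / 2)
          - (((pd j (V i) x - pd i (V j) x) / 2) ^ 2 + pd i (V j) x * pd j (V i) x)
        = (pd i (V j) x) ^ 2 / 4 - (pd j (V i) x) ^ 2 / 4 := fun i j => by ring
    have h0 : ∑ i, ∑ j, (pd i (V j) x * ((pd i (V j) x + pd j (V i) x) / 2)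
          - (((pd j (V i) x - pd i (V j) x) / 2) ^ 2 + pd i (V j) x * pd j (V i) x)) = 0 := by
      simp_rw [expand, Finset.sum_sub_distrib]
      rw [hsw, sub_self]
    simp_rw [Finset.sum_sub_distrib, Finset.sum_add_distrib] at h0
    linarith [h0]
  -- integrability of the vorticity-square sum
  have hΩint : ∀ i j : Fin 3,
      Integrable (fun x => ((pd j (V i) x - pd i (V j) x) / 2) ^ 2) := by
    intro i j
    have hc : Continuous fun x => ((pd j (V i) x - pd i (V j) x) / 2) ^ 2 :=
      (((hcont j i).sub (hcont i j)).div_const 2).pow 2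
    have hs : HasCompactSupport fun x => ((pd j (V i) x - pd i (V j) x) / 2) ^ 2 :=
      HasCompactSupport.comp₂_left (hcs j i) (hcs i j)
        (m := fun a b => ((a - b) / 2) ^ 2) (by norm_num)
    exact hc.integrable_of_hasCompactSupport hs
  have hF2int : Integrable (fun x => ∑ i, ∑ j, ((pd j (V i) x - pd i (V j) x) / 2) ^ 2) :=
    integrable_finset_sum _ fun i _ => integrable_finset_sum _ fun j _ => hΩint i j
  have hGint : Integrable (fun x => ∑ i, ∑ j,
      (pd i (V i) x * pd j (V j) x - pd i (V j) x * pd j (V i) x)) :=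
    integrable_finset_sum _ fun i _ => integrable_finset_sum _ fun j _ =>
      (hint i i _ (hcont j j)).sub (hint i j _ (hcont j i))
  have hsubint : ∀ i j : Fin 3, Integrable
      (fun x => pd i (V i) x * pd j (V j) x - pd i (V j) x * pd j (V i) x) :=
    fun i j => (hint i i _ (hcont j j)).sub (hint i j _ (hcont j i))
  -- ∫ G = 0
  have hG0 : ∫ x, ∑ i, ∑ j,
      (pd i (V i) x * pd j (V j) x - pd i (V j) x * pd j (V i) x) = 0 := by
    rw [integral_finset_sum _ (fun i _ => integrable_finset_sum _ fun j _ => hsubint i j)]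
    refine Finset.sum_eq_zero fun i _ => ?_
    rw [integral_finset_sum _ (fun j _ => hsubint i j)]
    refine Finset.sum_eq_zero fun j _ => ?_
    rw [integral_sub (hint i i _ (hcont j j)) (hint i j _ (hcont j i)), hibp i j, sub_self]
  -- rewrite the main integrand
  have hfun : (fun x => ((∑ i, pd i (V i) x) ^ 2
        - ∑ i, ∑ j, pd i (V j) x * ((pd i (V j) x + pd j (V i) x) / 2)))
      = fun x => (∑ i, ∑ j, (pd i (V i) x * pd j (V j) x - pd i (V j) x * pd j (V i) x))
          - ∑ i, ∑ j, ((pd j (V i) x - pd i (V j) x) / 2) ^ 2 := by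
    funext x
    have h1 := hpt x
    have h2 : (∑ i, pd i (V i) x) ^ 2 = ∑ i, ∑ j, pd i (V i) x * pd j (V j) x := by
      rw [sq, Finset.sum_mul_sum]
    simp_rw [Finset.sum_sub_distrib]
    linarith [h1, h2]
  -- main identity
  have hmain : (∫ x : Fin 3 → ℝ, ((∑ i, pd i (V i) x) ^ 2
        - ∑ i, ∑ j, pd i (V j) x * ((pd i (V j) x + pd j (V i) x) / 2)))
      = - ∫ x : Fin 3 → ℝ, ∑ i, ∑ j, ((pd j (V i) x - pd i (V j) x) / 2) ^ 2 := by
    rw [hfun, integral_sub hGint hF2int, hG0, zero_sub]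
  have hJ : 0 ≤ ∫ x : Fin 3 → ℝ, ∑ i, ∑ j, ((pd j (V i) x - pd i (V j) x) / 2) ^ 2 :=
    integral_nonneg fun x => Finset.sum_nonneg fun i _ =>
      Finset.sum_nonneg fun j _ => sq_nonneg _
  have hzero : (∫ x : Fin 3 → ℝ, ∑ i, ∑ j, ((pd j (V i) x - pd i (V j) x) / 2) ^ 2) = 0
      ↔ ∀ (x : Fin 3 → ℝ) (i j : Fin 3), (pd j (V i) x - pd i (V j) x) / 2 = 0 := by
    constructor
    · intro h
      have hnn : (0 : (Fin 3 → ℝ) → ℝ)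
          ≤ fun x => ∑ i, ∑ j, ((pd j (V i) x - pd i (V j) x) / 2) ^ 2 :=
        fun x => Finset.sum_nonneg fun i _ => Finset.sum_nonneg fun j _ => sq_nonneg _
      have h2 := (integral_eq_zero_iff_of_nonneg hnn hF2int).1 h
      have hc : Continuous fun x => ∑ i, ∑ j, ((pd j (V i) x - pd i (V j) x) / 2) ^ 2 :=
        continuous_finset_sum _ fun i _ => continuous_finset_sum _ fun j _ =>
          (((hcont j i).sub (hcont i j)).div_const 2).pow 2
      have h3 : (fun x => ∑ i, ∑ j, ((pd j (V i) x - pd i (V j) x) / 2) ^ 2)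
          = fun _ => (0 : ℝ) :=
        (Continuous.ae_eq_iff_eq volume hc continuous_const).1 h2
      intro x i j
      have h4 := congrFun h3 x
      have h6 := (Finset.sum_eq_zero_iff_of_nonneg fun i _ =>
        Finset.sum_nonneg fun j _ => sq_nonneg _).1 h4 i (Finset.mem_univ i)
      have h7 := (Finset.sum_eq_zero_iff_of_nonneg fun j _ => sq_nonneg _).1 h6 j
        (Finset.mem_univ j)
      exact pow_eq_zero_iff two_ne_zero |>.1 h7
    · intro h
      have h3 : (fun x => ∑ i, ∑ j, ((pd j (V i) x - pd i (V j) x) / 2) ^ 2)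
          = fun _ => (0 : ℝ) := by
        funext x
        exact Finset.sum_eq_zero fun i _ => Finset.sum_eq_zero fun j _ => by
          rw [h x i j]; ring
      rw [h3, integral_zero]
  have hc : (0 : ℝ) < 1 / (16 * Real.pi * G) := by positivity
  refine ⟨hmain, by rw [hmain]; linarith, by rw [hmain, neg_eq_zero]; exact hzero, ?_, ?_⟩
  · have : (∫ x : Fin 3 → ℝ, ((∑ i, pd i (V i) x) ^ 2
        - ∑ i, ∑ j, pd i (V j) x * ((pd i (V j) x + pd j (V i) x) / 2))) ≤ 0 := by
      rw [hmain]; linarith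
    exact mul_nonpos_of_nonneg_of_nonpos hc.le this
  · rw [mul_eq_zero]
    constructor
    · rintro (h | h)
      · exact absurd h hc.ne'
      · exact (by rw [hmain, neg_eq_zero] at h; exact hzero.1 h)
    · intro h
      right
      rw [hmain, neg_eq_zero]
      exact hzero.2 h
end

section
/- Let 0 < R₁ < R₂, let ρ > 0 and let G, M > 0 satisfy 0 < 2GM/R₂ < 1. Suppose P, a : [R₁, R₂] → ℝ are differentiable with ρ + P(r) > 0 on [R₁, R₂], satisfy the TOV equation P'(r) = −(ρ + P(r))·a'(r), and obey the boundary (junction) conditions a(R₁) = 0, P(R₂) = 0, and e^{2a(R₂)} = 1 − 2GM/R₂. Then P(R₁) = ρ·(√(1 − 2GM/R₂) − 1) < 0; in particular the pressure at the inner radius of the shell is strictly negative, contradicting the assumption of a positive isotropic pressure. -/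
/-- A constant-density shell obeying the TOV equation with Minkowski interior
(`a(R₁) = 0`), vanishing surface pressure (`P(R₂) = 0`), and Schwarzschild exterior
(`e^{2a(R₂)} = 1 - 2GM/R₂`) must have strictly negative pressure at its inner radius:
`P(R₁) = ρ(√(1 - 2GM/R₂) - 1) < 0`, contradicting a positive isotropic pressure. -/
theorem tov_shell_negative_inner_pressure
    (R₁ R₂ ρ G M : ℝ) (h1 : 0 < R₁) (h12 : R₁ < R₂)
    (hρ : 0 < ρ) (hG : 0 < G) (hM : 0 < M)
    (hcompact : 2 * G * M / R₂ < 1)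
    (P a P' a' : ℝ → ℝ)
    (hP : ∀ r ∈ Set.Icc R₁ R₂, HasDerivWithinAt P (P' r) (Set.Icc R₁ R₂) r)
    (ha : ∀ r ∈ Set.Icc R₁ R₂, HasDerivWithinAt a (a' r) (Set.Icc R₁ R₂) r)
    (hpos : ∀ r ∈ Set.Icc R₁ R₂, 0 < ρ + P r)
    (hTOV : ∀ r ∈ Set.Icc R₁ R₂, P' r = -(ρ + P r) * a' r)
    (ha1 : a R₁ = 0) (hP2 : P R₂ = 0)
    (ha2 : Real.exp (2 * a R₂) = 1 - 2 * G * M / R₂) :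
    P R₁ = ρ * (Real.sqrt (1 - 2 * G * M / R₂) - 1) ∧ P R₁ < 0 := by
  set f : ℝ → ℝ := fun r => (ρ + P r) * Real.exp (a r) with hf
  have hfd : ∀ r ∈ Set.Icc R₁ R₂, HasDerivWithinAt f 0 (Set.Icc R₁ R₂) r := by
    intro r hr
    have hPd := (hP r hr).const_add ρ
    have had : HasDerivWithinAt (fun x => Real.exp (a x)) (Real.exp (a r) * a' r)
        (Set.Icc R₁ R₂) r :=
      (Real.hasDerivAt_exp (a r)).comp_hasDerivWithinAt r (ha r hr)
    have := hPd.mul had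
    have heq : P' r * Real.exp (a r) + (ρ + P r) * (Real.exp (a r) * a' r) = 0 := by
      rw [hTOV r hr]; ring
    rw [heq] at this; exact this
  have hconst : ∀ x ∈ Set.Icc R₁ R₂, f x = f R₁ := by
    apply constant_of_derivWithin_zero
    · exact fun x hx => (hfd x hx).differentiableWithinAt
    · intro x hx
      exact (hfd x (Set.mem_Icc_of_Ico hx)).derivWithin
        (uniqueDiffOn_Icc h12 x (Set.mem_Icc_of_Ico hx))
  have hmem2 : R₂ ∈ Set.Icc R₁ R₂ := Set.right_mem_Icc.2 h12.le
  have hkey : f R₂ = f R₁ := hconst R₂ hmem2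
  have hfR1 : f R₁ = ρ + P R₁ := by simp [hf, ha1]
  have hsq : Real.exp (a R₂) = Real.sqrt (1 - 2 * G * M / R₂) := by
    rw [← ha2, show 2 * a R₂ = a R₂ + a R₂ by ring, Real.exp_add,
      Real.sqrt_mul_self (Real.exp_pos _).le]
  have hf2 : f R₂ = ρ * Real.sqrt (1 - 2 * G * M / R₂) := by
    simp [hf, hP2, hsq]
  have hPR1 : P R₁ = ρ * (Real.sqrt (1 - 2 * G * M / R₂) - 1) := by
    have := hkey
    rw [hf2, hfR1] at this
    linarith [this]
  refine ⟨hPR1, ?_⟩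
  have h0 : 0 < 2 * G * M / R₂ := by
    have : 0 < R₂ := h1.trans h12
    positivity
  have hlt1 : Real.sqrt (1 - 2 * G * M / R₂) < 1 := by
    rcases le_or_gt (1 - 2 * G * M / R₂) 0 with h | h
    · calc Real.sqrt (1 - 2 * G * M / R₂) = 0 := Real.sqrt_eq_zero_of_nonpos h
        _ < 1 := one_pos
    · have := Real.sqrt_lt_sqrt h.le (show 1 - 2 * G * M / R₂ < 1 by linarith)
      simpa using this
  rw [hPR1]
  exact mul_neg_of_pos_of_neg hρ (by linarith)
end
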